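/- Let P be a convex polytope with vertex v, and let u₁, u₂ be nonzero vectors such that v + u₁, v + u₂, and v + u₁ + u₂ are all vertices of P. Then the segment conv(v, v + u₁ + u₂) is not an edge (one-dimensional face) of P. -/

import Mathlib

theorem stmt9 {d : ℕ} (t : Finset (EuclideanSpace ℝ (Fin d)))
    (P : Set (EuclideanSpace ℝ (Fin d))) (hP : P = convexHull ℝ ↑t)
    (v u₁ u₂ : EuclideanSpace ℝ (Fin d)) (hu₁ : u₁ ≠ 0) (hu₂ : u₂ ≠ 0)
    (hv : v ∈ Set.extremePoints ℝ P)
    (hv1 : v + u₁ ∈ Set.extremePoints ℝ P)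
    (hv2 : v + u₂ ∈ Set.extremePoints ℝ P)
    (hv12 : v + u₁ + u₂ ∈ Set.extremePoints ℝ P) :
    ¬ ∃ f : EuclideanSpace ℝ (Fin d) →ₗ[ℝ] ℝ,
      {x | x ∈ P ∧ ∀ y ∈ P, f y ≤ f x} = segment ℝ v (v + u₁ + u₂) := by
  rintro ⟨f, hf⟩
  have hvS : v ∈ {x | x ∈ P ∧ ∀ y ∈ P, f y ≤ f x} := by
    rw [hf]; exact left_mem_segment ℝ v (v + u₁ + u₂)
  have hwS : v + u₁ + u₂ ∈ {x | x ∈ P ∧ ∀ y ∈ P, f y ≤ f x} := by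
    rw [hf]; exact right_mem_segment ℝ v (v + u₁ + u₂)
  obtain ⟨hvP, hvmax⟩ := hvS
  obtain ⟨hwP, hwmax⟩ := hwS
  -- f(v+u₁) = f(v)
  have h1 : f (v + u₁) ≤ f v := hvmax _ hv1.1
  have h2 : f (v + u₂) ≤ f v := hvmax _ hv2.1
  have h12 : f v ≤ f (v + u₁ + u₂) := hwmax _ hvP
  have hsum : f (v + u₁) + f (v + u₂) = f v + f (v + u₁ + u₂) := by
    simp only [map_add]; ring
  have h1e : f (v + u₁) = f v := by linarith
  have h2e : f (v + u₂) = f v := by linarith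
  -- hence v+u₁ and v+u₂ are in the segment
  have hm1 : v + u₁ ∈ segment ℝ v (v + u₁ + u₂) := by
    rw [← hf]
    exact ⟨hv1.1, fun y hy => (hvmax y hy).trans_eq h1e.symm⟩
  have hm2 : v + u₂ ∈ segment ℝ v (v + u₁ + u₂) := by
    rw [← hf]
    exact ⟨hv2.1, fun y hy => (hvmax y hy).trans_eq h2e.symm⟩
  set w := u₁ + u₂ with hwdef
  obtain ⟨a, b, ha, hb, hab, hx⟩ := hm1
  obtain ⟨a', b', ha', hb', hab', hx'⟩ := hm2
  rw [show a = 1 - b by linarith] at hx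
  rw [show a' = 1 - b' by linarith] at hx'
  have hu1w : u₁ = b • w := by
    have h1' : u₁ = ((1 - b) • v + b • (v + u₁ + u₂)) - v := by rw [hx]; abel
    rw [h1', hwdef]; module
  have hu2w : u₂ = b' • w := by
    have h2' : u₂ = ((1 - b') • v + b' • (v + u₁ + u₂)) - v := by rw [hx']; abel
    rw [h2', hwdef]; module
  have hw0 : w ≠ 0 := fun h0 => hu₁ (by rw [hu1w, h0, smul_zero])
  have hbb' : b + b' = 1 := by
    have hws : w = (b + b') • w := by
      rw [add_smul, hwdef, ← hu1w, ← hu2w]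
    have h2 : (b + b' - 1) • w = 0 := by
      rw [sub_smul, one_smul, ← hws, sub_self]
    rcases smul_eq_zero.mp h2 with h | h
    · linarith [h]
    · exact absurd h hw0
  have hb0 : b ≠ 0 := fun h => hu₁ (by rw [hu1w, h, zero_smul])
  have hb1 : b ≠ 1 := fun h => hu₂ (by rw [hu2w, show b' = 0 by linarith, zero_smul])
  have hbpos : 0 < b := lt_of_le_of_ne hb (Ne.symm hb0)
  have hblt : b < 1 := lt_of_le_of_ne (by linarith [hb']) hb1
  have hopen : v + u₁ ∈ openSegment ℝ v (v + w) := by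
    refine ⟨1 - b, b, by linarith, hbpos, by ring, ?_⟩
    rw [hu1w]; module
  have hvwP : v + w ∈ P := by
    rw [hwdef, ← add_assoc]; exact hwP
  have hfin := (hv1.2 hvP hvwP hopen)
  exact hu₁ (by simpa using hfin.symm)
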